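/- Let R be a commutative ring and let y_1, ..., y_d ∈ R be elements such that y_d is a non zero divisor on R/(y_1,...,y_{d-1}). Set H = (y_1,...,y_d) and H' = (y_1,...,y_{d-1}). Then for any ideal I containing H one has H' ∩ H·I = H'·I. -/

import Mathlib

theorem stmt_5 {R : Type*} [CommRing R] (d : ℕ) (y : Fin (d + 1) → R)
    (H' : Ideal R) (hH' : H' = Ideal.span (Set.range fun i : Fin d => y i.castSucc))
    (H : Ideal R) (hH : H = Ideal.span (Set.range y))
    (hreg : H'.colon (Ideal.span {y (Fin.last d)}) = H')
    (I : Ideal R) (hHI : H ≤ I) :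
    H' ⊓ (H * I) = H' * I := by
  have hrange : Set.range y = (Set.range fun i : Fin d => y i.castSucc) ∪ {y (Fin.last d)} := by
    ext x
    constructor
    · rintro ⟨i, rfl⟩
      induction i using Fin.lastCases with
      | last => exact Or.inr rfl
      | cast j => exact Or.inl ⟨j, rfl⟩
    · rintro (⟨i, rfl⟩ | rfl)
      · exact ⟨i.castSucc, rfl⟩
      · exact ⟨Fin.last d, rfl⟩
  have hsplit : H = H' ⊔ Ideal.span {y (Fin.last d)} := by
    rw [hH, hrange, Ideal.span_union, hH']
  have hyd : y (Fin.last d) ∈ I := hHI (hH ▸ Ideal.subset_span ⟨Fin.last d, rfl⟩)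
  have hH'H : H' ≤ H := hsplit ▸ le_sup_left
  apply le_antisymm
  · intro x hx
    obtain ⟨hx1, hx2⟩ := hx
    rw [hsplit, Ideal.sup_mul] at hx2
    obtain ⟨a, ha, b, hb, rfl⟩ := Submodule.mem_sup.mp hx2
    have hbH' : b ∈ Ideal.span {y (Fin.last d)} * I := hb
    rw [Ideal.mem_span_singleton_mul] at hbH'
    obtain ⟨c, hc, rfl⟩ := hbH'
    have hcol : y (Fin.last d) * c ∈ H' := by
      have haH' : a ∈ H' := Ideal.mul_le_left ha
      have := H'.sub_mem hx1 haH'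
      simpa using this
    have hcH' : c ∈ H' := by
      rw [← hreg]
      rw [Ideal.mem_colon_span_singleton]
      exact mul_comm (y (Fin.last d)) c ▸ hcol
    have : y (Fin.last d) * c ∈ H' * I := by
      rw [mul_comm (y (Fin.last d)) c]
      exact Ideal.mul_mem_mul hcH' hyd
    exact add_mem ha this
  · exact le_inf (Ideal.mul_le_left) (Ideal.mul_mono hH'H le_rfl)
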